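/- Let a, b > 0 and H, V, θ ∈ ℝ, and set z = e^{2H} e^{iθ} ∈ ℂ. (a) If b − a z ≠ 0, then b/a − (a² + b²)/(ab − a² z) = −(a + b z)/(b − a z). (b) The equation |a + b z| = e^{2V} |b − a z| holds if and only if cos θ = [ a² (e^{2H+2V} − e^{−2H−2V}) + b² (e^{−2H+2V} − e^{2H−2V}) ] / ( 2ab (e^{2V} + e^{−2V}) ). -/

import Mathlib

/-- with `z = e^{2H} e^{iθ}`:
(a) if `b − az ≠ 0` then `b/a − (a² + b²)/(ab − a²z) = −(a + bz)/(b − az)`;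
(b) `|a + bz| = e^{2V}|b − az|` iff
`cos θ = (a²(e^{2H+2V} − e^{−2H−2V}) + b²(e^{−2H+2V} − e^{2H−2V}))/(2ab(e^{2V} + e^{−2V}))`. -/
theorem stmt_17 (a b H V θ : ℝ) (ha : 0 < a) (hb : 0 < b) :
    let z : ℂ := ((Real.exp (2 * H) : ℝ) : ℂ) * Complex.exp (θ * Complex.I)
    (((b : ℂ) - (a : ℂ) * z ≠ 0 →
        (b : ℂ) / (a : ℂ)
            - ((a ^ 2 + b ^ 2 : ℝ) : ℂ) / (((a * b : ℝ) : ℂ) - ((a ^ 2 : ℝ) : ℂ) * z)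
          = -(((a : ℂ) + (b : ℂ) * z) / ((b : ℂ) - (a : ℂ) * z)))) ∧
    (‖(a : ℂ) + (b : ℂ) * z‖
        = Real.exp (2 * V) * ‖(b : ℂ) - (a : ℂ) * z‖
      ↔ Real.cos θ =
          (a ^ 2 * (Real.exp (2 * H + 2 * V) - Real.exp (-2 * H - 2 * V))
            + b ^ 2 * (Real.exp (-2 * H + 2 * V) - Real.exp (2 * H - 2 * V)))
          / (2 * a * b * (Real.exp (2 * V) + Real.exp (-2 * V)))) := by
  intro z
  have hP : (0:ℝ) < Real.exp (2 * H) := Real.exp_pos _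
  have hQ : (0:ℝ) < Real.exp (2 * V) := Real.exp_pos _
  set P := Real.exp (2 * H) with hPdef
  set Q := Real.exp (2 * V) with hQdef
  have ha' : (a:ℂ) ≠ 0 := by exact_mod_cast ha.ne'
  constructor
  · intro hz
    push_cast
    rw [show (a:ℂ) * b - (a:ℂ) ^ 2 * z = a * (b - a * z) by ring]
    rw [← neg_div, div_sub_div _ _ ha' (mul_ne_zero ha' hz),
      div_eq_div_iff (mul_ne_zero ha' (mul_ne_zero ha' hz)) hz]
    ring
  · have hz_re : z.re = P * Real.cos θ := by
      simp only [z, Complex.mul_re, Complex.ofReal_re, Complex.ofReal_im, Complex.exp_mul_I,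
        Complex.add_re, Complex.mul_re, Complex.I_re, Complex.I_im, Complex.cos_ofReal_re,
        Complex.sin_ofReal_re, Complex.add_im, Complex.mul_im, Complex.cos_ofReal_im,
        Complex.sin_ofReal_im]
      ring
    have hz_im : z.im = P * Real.sin θ := by
      simp only [z, Complex.mul_im, Complex.ofReal_re, Complex.ofReal_im, Complex.exp_mul_I,
        Complex.add_re, Complex.mul_re, Complex.I_re, Complex.I_im, Complex.cos_ofReal_re,
        Complex.sin_ofReal_re, Complex.add_im, Complex.mul_im, Complex.cos_ofReal_im,
        Complex.sin_ofReal_im]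
      ring
    have e1 : (‖(a:ℂ) + (b:ℂ) * z‖) ^ 2
        = a ^ 2 + b ^ 2 * P ^ 2 + 2 * a * b * P * Real.cos θ := by
      rw [Complex.sq_norm, Complex.normSq_apply]
      simp only [Complex.add_re, Complex.add_im, Complex.mul_re, Complex.mul_im,
        Complex.ofReal_re, Complex.ofReal_im, hz_re, hz_im]
      linear_combination (b ^ 2 * P ^ 2) * (Real.sin_sq_add_cos_sq θ)
    have e2 : (‖(b:ℂ) - (a:ℂ) * z‖) ^ 2
        = b ^ 2 + a ^ 2 * P ^ 2 - 2 * a * b * P * Real.cos θ := by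
      rw [Complex.sq_norm, Complex.normSq_apply]
      simp only [Complex.sub_re, Complex.sub_im, Complex.mul_re, Complex.mul_im,
        Complex.ofReal_re, Complex.ofReal_im, hz_re, hz_im]
      linear_combination (a ^ 2 * P ^ 2) * (Real.sin_sq_add_cos_sq θ)
    have hA : Real.exp (2 * H + 2 * V) = P * Q := Real.exp_add _ _
    have hB : Real.exp (-2 * H - 2 * V) = (P * Q)⁻¹ := by
      rw [show -2 * H - 2 * V = -(2 * H + 2 * V) by ring, Real.exp_neg, Real.exp_add]
    have hC : Real.exp (-2 * H + 2 * V) = P⁻¹ * Q := by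
      rw [show -2 * H + 2 * V = -(2 * H) + 2 * V by ring, Real.exp_add, Real.exp_neg]
    have hD : Real.exp (2 * H - 2 * V) = P * Q⁻¹ := by
      rw [show 2 * H - 2 * V = 2 * H + -(2 * V) by ring, Real.exp_add, Real.exp_neg]
    have hE : Real.exp (-2 * V) = Q⁻¹ := by
      rw [show -2 * V = -(2 * V) by ring, Real.exp_neg]
    rw [← sq_eq_sq₀ (norm_nonneg _) (mul_nonneg hQ.le (norm_nonneg _)),
      mul_pow, e1, e2, hA, hB, hC, hD, hE]
    have hden : 2 * a * b * (Q + Q⁻¹) ≠ 0 := by positivity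
    rw [eq_div_iff hden]
    have hP0 := hP.ne'
    have hQ0 := hQ.ne'
    constructor
    · intro h
      field_simp
      linear_combination h
    · intro h
      field_simp at h
      apply mul_left_cancel₀ (mul_ne_zero hP0 hQ0)
      linear_combination (P * Q) * h
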